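/- arXiv:1604.05227 — 6 statements merged into one kernel-verified Lean document; each statement's English description precedes it below -/
import Mathlib

section
/- Let U ⊆ ℝ² be open, I ⊆ ℝ an open time interval, g ∈ ℝ, and let h : I × U → ℝ, v : I × U → ℝ², b : U → ℝ, D : I × U → ℝ² be continuously differentiable with h(t,x) > 0 for all (t,x). Set η = h + b and q = h v. Then the momentum equation ∂_t(hv) + ∇·(hv ⊗ v) + g h ∇η + D = 0 holds at a point if and only if the pre-balanced momentum equation ∂_t q + ∇·( (q ⊗ q)/(η − b) + (1/2) g (η² − 2ηb) I₂ ) + D = − g η ∇b holds at that point, where I₂ is the 2×2 identity matrix. -/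
noncomputable section

abbrev E2 := EuclideanSpace ℝ (Fin 2)

/-- The `i`-th spatial partial derivative of a scalar function on `ℝ²`. -/
def pd (i : Fin 2) (f : E2 → ℝ) (x : E2) : ℝ := fderiv ℝ f x (EuclideanSpace.single i 1)

/-- The `i`-th component of the row-wise divergence of a (2×2)-matrix-valued field. -/
def divRow (M : E2 → Fin 2 → Fin 2 → ℝ) (i : Fin 2) (x : E2) : ℝ :=
  ∑ j, pd j (fun y => M y i j) x

/-- Outer product of two vectors of `ℝ²`. -/
def outer (a b : E2) : Fin 2 → Fin 2 → ℝ := fun i j => a i * b j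

/-- With `h > 0` continuously differentiable on `I × U`, `v, D`
continuously differentiable, `b` time-independent and continuously differentiable,
`η = h + b`, `q = h v`, the momentum equation
`∂ₜ(hv) + ∇·(hv ⊗ v) + g h ∇η + D = 0`
holds at a point of `I × U` iff the pre-balanced momentum equation
`∂ₜ q + ∇·( q⊗q/(η−b) + (1/2) g (η² − 2ηb) I₂ ) + D = − g η ∇b`
holds at that point. -/
theorem prebalanced_momentum_equivalence
    (I : Set ℝ) (hI : IsOpen I) (U : Set E2) (hU : IsOpen U) (g : ℝ)
    (h : ℝ → E2 → ℝ) (v : ℝ → E2 → E2) (b : E2 → ℝ) (D : ℝ → E2 → E2)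
    (h_smooth : ContDiffOn ℝ 1 (fun p : ℝ × E2 => h p.1 p.2) (I ×ˢ U))
    (v_smooth : ContDiffOn ℝ 1 (fun p : ℝ × E2 => fun i => v p.1 p.2 i) (I ×ˢ U))
    (b_smooth : ContDiffOn ℝ 1 b U)
    (D_smooth : ContDiffOn ℝ 1 (fun p : ℝ × E2 => fun i => D p.1 p.2 i) (I ×ˢ U))
    (h_pos : ∀ t ∈ I, ∀ x ∈ U, 0 < h t x)
    (η : ℝ → E2 → ℝ) (hη : ∀ t x, η t x = h t x + b x)
    (q : ℝ → E2 → E2) (hq : ∀ t x, q t x = h t x • v t x)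
    (t : ℝ) (ht : t ∈ I) (x : E2) (hx : x ∈ U) :
    (∀ i : Fin 2,
        deriv (fun s => q s x i) t
          + divRow (fun y => outer (h t y • v t y) (v t y)) i x
          + g * h t x * pd i (fun y => η t y) x
          + D t x i = 0)
      ↔ (∀ i : Fin 2,
        deriv (fun s => q s x i) t
          + divRow (fun y i' j =>
              q t y i' * q t y j / (η t y - b y)
                + (1 / 2 : ℝ) * g * ((η t y) ^ 2 - 2 * η t y * b y)
                  * (if i' = j then (1 : ℝ) else 0)) i x
          + D t x i
          = -(g * η t x * pd i b x)) := by

  -- differentiability of h t · at x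
  have hmem : (t, x) ∈ I ×ˢ U := ⟨ht, hx⟩
  have hopen : IsOpen (I ×ˢ U) := hI.prod hU
  have hpair : DifferentiableAt ℝ (fun y : E2 => ((t, y) : ℝ × E2)) x :=
    (differentiableAt_const t).prodMk differentiableAt_id
  have hd : DifferentiableAt ℝ (fun y => h t y) x :=
    (((h_smooth.differentiableOn one_ne_zero).differentiableAt
      (hopen.mem_nhds hmem)).comp x hpair)
  have bd : DifferentiableAt ℝ b x :=
    (b_smooth.differentiableOn one_ne_zero).differentiableAt (hU.mem_nhds hx)
  set dh : Fin 2 → ℝ := fun i => pd i (fun y => h t y) x with hdh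
  set db : Fin 2 → ℝ := fun i => pd i b x with hdb
  -- pd of η
  have pdη : ∀ i, pd i (fun y => η t y) x = dh i + db i := by
    intro i
    have heq : (fun y => η t y) = fun y => h t y + b y := funext fun y => hη t y
    rw [hdh, hdb]
    simp only [pd, heq, fderiv_fun_add hd bd]
    simp
  -- the scalar pressure-like term, simplified
  set c : E2 → ℝ := fun y => (1/2 : ℝ) * g * (h t y * h t y - b y * b y) with hc
  have cd : DifferentiableAt ℝ c x := (((hd.mul hd).sub (bd.mul bd)).const_mul _)
  have pdc : ∀ i, pd i c x = g * h t x * dh i - g * b x * db i := by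
    intro i
    have H : HasFDerivAt c (((1/2 : ℝ) * g) •
        ((h t x • fderiv ℝ (fun y => h t y) x + h t x • fderiv ℝ (fun y => h t y) x) -
         (b x • fderiv ℝ b x + b x • fderiv ℝ b x))) x := by
      exact ((hd.hasFDerivAt.mul hd.hasFDerivAt).sub
        (bd.hasFDerivAt.mul bd.hasFDerivAt)).const_mul _
    rw [pd, H.fderiv]
    simp [hdh, hdb, pd]
    ring
  -- key: divergence identity
  have key : ∀ i : Fin 2,
      divRow (fun y i' j =>
              q t y i' * q t y j / (η t y - b y)
                + (1 / 2 : ℝ) * g * ((η t y) ^ 2 - 2 * η t y * b y)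
                  * (if i' = j then (1 : ℝ) else 0)) i x
      = divRow (fun y => outer (h t y • v t y) (v t y)) i x
        + (g * h t x * dh i - g * b x * db i) := by
    intro i
    have ev : ∀ j : Fin 2, (fun y =>
        q t y i * q t y j / (η t y - b y)
          + (1 / 2 : ℝ) * g * ((η t y) ^ 2 - 2 * η t y * b y)
            * (if i = j then (1 : ℝ) else 0))
        =ᶠ[nhds x] (fun y => outer (h t y • v t y) (v t y) i j
          + (if i = j then c y else 0)) := by
      intro j
      filter_upwards [hU.mem_nhds hx] with y hy
      have hpos := h_pos t ht y hy
      have hne : h t y ≠ 0 := ne_of_gt hpos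
      simp only [hq, hη, outer, c, PiLp.smul_apply, smul_eq_mul]
      have : h t y + b y - b y = h t y := by ring
      rw [this]
      by_cases hij : i = j <;> simp [hij] <;> field_simp <;> ring
    -- differentiability of each summand
    have vdiffs : ∀ j : Fin 2, DifferentiableAt ℝ (fun y => v t y j) x := by
      intro j
      have := (((v_smooth.differentiableOn one_ne_zero).differentiableAt
        (hopen.mem_nhds hmem)).comp x hpair)
      exact (differentiableAt_pi.mp this) j
    have Adiff : ∀ j, DifferentiableAt ℝ
        (fun y => outer (h t y • v t y) (v t y) i j) x := by
      intro j
      have : (fun y => outer (h t y • v t y) (v t y) i j)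
          = fun y => (h t y * v t y i) * v t y j := by
        funext y; simp [outer, PiLp.smul_apply, smul_eq_mul]
      rw [this]
      exact ((hd.mul (vdiffs i)).mul (vdiffs j))
    have Bdiff : ∀ j : Fin 2, DifferentiableAt ℝ
        (fun y => (if i = j then c y else 0 : ℝ)) x := by
      intro j
      by_cases hij : i = j <;> simp [hij]
      exact cd
    unfold divRow
    have step : ∀ j : Fin 2,
        pd j (fun y =>
          q t y i * q t y j / (η t y - b y)
            + (1 / 2 : ℝ) * g * ((η t y) ^ 2 - 2 * η t y * b y)
              * (if i = j then (1 : ℝ) else 0)) x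
        = pd j (fun y => outer (h t y • v t y) (v t y) i j) x
          + (if i = j then pd j c x else 0) := by
      intro j
      have hfe := Filter.EventuallyEq.fderiv_eq (𝕜 := ℝ) (ev j)
      simp only [pd]
      rw [hfe, fderiv_fun_add (Adiff j) (Bdiff j), ContinuousLinearMap.add_apply]
      congr 1
      by_cases hij : i = j <;> simp [hij]
    rw [Finset.sum_congr rfl (fun j _ => step j), Finset.sum_add_distrib]
    rw [Finset.sum_ite_eq Finset.univ i (fun j => pd j c x)]
    simp [pdc i]
  constructor
  · intro H i
    have hi := H i
    rw [pdη i] at hi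
    rw [key i, hη t x]
    linarith
  · intro H i
    have hi := H i
    rw [key i, hη t x] at hi
    rw [pdη i]
    linarith
end
end

section
/- Suppose g ≥ 0, n ∈ ℝ² is a unit vector, h⁻ = η⁻ − b⁻ > 0 and the reconstructed interior height satisfies ȟ⁻ > 0. Then the local wave speed of the reconstructed interior state does not exceed that of the original interior state: |q̌⁻ · n| / ȟ⁻ + √(g ȟ⁻) ≤ |q⁻ · n| / h⁻ + √(g h⁻). -/
noncomputable section

open scoped RealInnerProductSpace

/-- `b* = max(b⁻, b⁺)`. -/
def bstar (bm bp : ℝ) : ℝ := max bm bp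

/-- `ȟ⁻ = max(0, η⁻ − b*)`. -/
def hcheckm (ηm bm bp : ℝ) : ℝ := max 0 (ηm - bstar bm bp)

/-- `q̌⁻ = (ȟ⁻/(η⁻ − b⁻)) q⁻`. -/
def qcheckm (ηm bm bp : ℝ) (qm : E2) : E2 := (hcheckm ηm bm bp / (ηm - bm)) • qm

/-- With `g ≥ 0`, `n` a unit vector, `h⁻ = η⁻ − b⁻ > 0` and `ȟ⁻ > 0`,
the local wave speed of the reconstructed interior state does not exceed that of the
original interior state:
`|q̌⁻·n|/ȟ⁻ + √(g ȟ⁻) ≤ |q⁻·n|/h⁻ + √(g h⁻)`. -/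
theorem hydrostatic_reconstruction_wave_speed (g : ℝ) (hg : 0 ≤ g)
    (n : E2) (hn : ‖n‖ = 1) (ηm bm bp : ℝ) (qm : E2)
    (hpos : 0 < ηm - bm) (hcpos : 0 < hcheckm ηm bm bp) :
    |⟪qcheckm ηm bm bp qm, n⟫| / hcheckm ηm bm bp + Real.sqrt (g * hcheckm ηm bm bp)
      ≤ |⟪qm, n⟫| / (ηm - bm) + Real.sqrt (g * (ηm - bm)) := by
  set hc := hcheckm ηm bm bp with hhc
  have hle : hc ≤ ηm - bm := by
    have : ηm - bstar bm bp ≤ ηm - bm := by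
      have := le_max_left bm bp
      simp [bstar]; linarith [le_max_left bm bp]
    simpa [hhc, hcheckm] using max_le (le_of_lt hpos) this
  have h1 : |⟪qcheckm ηm bm bp qm, n⟫| / hc = |⟪qm, n⟫| / (ηm - bm) := by
    rw [qcheckm, real_inner_smul_left, abs_mul, abs_div,
      abs_of_pos hcpos, abs_of_pos hpos]
    field_simp
  rw [h1]
  have := Real.sqrt_le_sqrt (mul_le_mul_of_nonneg_left hle hg)
  linarith
end
end

section
/- Let g ∈ ℝ, let n ∈ ℝ² be a unit vector, let a ∈ ℝ be arbitrary, and consider an interface at rest: η⁻ = η⁺ = η^e ∈ ℝ and q⁻ = q⁺ = 0 ∈ ℝ², with bottom values b⁻, b⁺ ∈ ℝ. Apply the hydrostatic reconstruction, set W̌⁻ = (η̌⁻, q̌⁻) and W̌⁺ = (η̌⁺, q̌⁺). Then the modified numerical flux equals the exact interior normal flux: 𝔽_h(W̌⁻, W̌⁺, b̌, b̌, n) + ( 0 , g η̌⁻ (b̌ − b⁻) n ) = 𝔽((η^e, 0), b⁻)·n. -/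
noncomputable section

open scoped RealInnerProductSpace

/-- `b̌ = b* − max(0, b* − η⁻)`. -/
def bcheck (ηm bm bp : ℝ) : ℝ := bstar bm bp - max 0 (bstar bm bp - ηm)

/-- `ȟ⁺ = max(0, η⁺ − b*)`. -/
def hcheckp (ηm ηp bm bp : ℝ) : ℝ := max 0 (ηp - bstar bm bp)

/-- `η̌⁻ = ȟ⁻ + b̌`. -/
def etacheckm (ηm bm bp : ℝ) : ℝ := hcheckm ηm bm bp + bcheck ηm bm bp

/-- `η̌⁺ = ȟ⁺ + b̌`. -/
def etacheckp (ηm ηp bm bp : ℝ) : ℝ := hcheckp ηm ηp bm bp + bcheck ηm bm bp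

/-- `q̌⁺ = (ȟ⁺/(η⁺ − b⁺)) q⁺`. -/
def qcheckp (ηm ηp bm bp : ℝ) (qp : E2) : E2 := (hcheckp ηm ηp bm bp / (ηp - bp)) • qp

/-- The pre-balanced normal flux `𝔽(W, b)·n` for `W = (η, q)`:
`( q·n , ((q·n)/(η − b)) q + (1/2) g (η² − 2ηb) n )`. -/
def Fflux (g : ℝ) (W : ℝ × E2) (b : ℝ) (n : E2) : ℝ × E2 :=
  (⟪W.2, n⟫, (⟪W.2, n⟫ / (W.1 - b)) • W.2 + ((1 / 2 : ℝ) * g * (W.1 ^ 2 - 2 * W.1 * b)) • n)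

/-- The global Lax–Friedrichs flux with speed `a`:
`𝔽_h(W⁻, W⁺, b⁻, b⁺, n) = (1/2)( 𝔽(W⁻,b⁻)·n + 𝔽(W⁺,b⁺)·n − a (W⁺ − W⁻) )`. -/
def LFflux (g a : ℝ) (Wm Wp : ℝ × E2) (bm bp : ℝ) (n : E2) : ℝ × E2 :=
  (1 / 2 : ℝ) • (Fflux g Wm bm n + Fflux g Wp bp n - a • (Wp - Wm))

/-- At an interface at rest (`η⁻ = η⁺ = η^e`, `q⁻ = q⁺ = 0`), for any
gravity `g`, unit normal `n` and wave speed `a`, the modified numerical flux equals the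
exact interior normal flux:
`𝔽_h(W̌⁻, W̌⁺, b̌, b̌, n) + (0, g η̌⁻ (b̌ − b⁻) n) = 𝔽((η^e, 0), b⁻)·n`. -/
theorem well_balanced_flux_at_rest (g a ηe bm bp : ℝ) (n : E2) (hn : ‖n‖ = 1) :
    LFflux g a
        (etacheckm ηe bm bp, qcheckm ηe bm bp (0 : E2))
        (etacheckp ηe ηe bm bp, qcheckp ηe ηe bm bp (0 : E2))
        (bcheck ηe bm bp) (bcheck ηe bm bp) n
      + ((0 : ℝ), (g * etacheckm ηe bm bp * (bcheck ηe bm bp - bm)) • n)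
      = Fflux g (ηe, (0 : E2)) bm n := by
  have hq : qcheckm ηe bm bp (0 : E2) = 0 := by simp [qcheckm]
  have hq' : qcheckp ηe ηe bm bp (0 : E2) = 0 := by simp [qcheckp]
  have hη : etacheckm ηe bm bp = ηe := by
    unfold etacheckm hcheckm bcheck
    rcases le_total ηe (bstar bm bp) with h | h
    · rw [max_eq_left (by linarith), max_eq_right (by linarith)]; ring
    · rw [max_eq_right (by linarith), max_eq_left (by linarith)]; ring
  have hη' : etacheckp ηe ηe bm bp = ηe := hη
  rw [hq, hq', hη, hη']
  unfold LFflux Fflux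
  simp only [inner_zero_left, zero_div, zero_smul, zero_add, sub_self, smul_zero, sub_zero]
  apply Prod.ext
  · simp
  · show (1/2 : ℝ) • (((1/2 : ℝ)*g*(ηe^2 - 2*ηe*bcheck ηe bm bp)) • n
        + ((1/2 : ℝ)*g*(ηe^2 - 2*ηe*bcheck ηe bm bp)) • n)
      + (g * ηe * (bcheck ηe bm bp - bm)) • n
      = ((1/2 : ℝ)*g*(ηe^2 - 2*ηe*bm)) • n
    rw [← add_smul, smul_smul, ← add_smul]
    congr 1
    ring
end
end

section
/- Let g ≥ 0, Δt > 0 and |T| > 0 be real numbers. Let I be a finite index set and for each i ∈ I let ℓᵢ > 0, let nᵢ ∈ ℝ² with ‖nᵢ‖ = 1, and assume Σ_{i∈I} ℓᵢ nᵢ = 0. Let (η, q, b) ∈ ℝ × ℝ² × ℝ be interior data with h = η − b ≥ 0 and q = 0 whenever h = 0, and for each i let (ηᵢ, qᵢ, bᵢ) be exterior data with hᵢ = ηᵢ − bᵢ ≥ 0 and qᵢ = 0 whenever hᵢ = 0. For each i apply the hydrostatic reconstruction with interior data (η, q, b) and exterior data (ηᵢ, qᵢ, bᵢ), giving ȟᵢ⁻,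 ȟᵢ⁺, η̌ᵢ⁻, η̌ᵢ⁺, q̌ᵢ⁻, q̌ᵢ⁺. Let a ≥ 0 be such that for every i ∈ I: if h > 0 then a ≥ |q·nᵢ|/h + √(g h), and if hᵢ > 0 then a ≥ |qᵢ·nᵢ|/hᵢ + √(g hᵢ). If the CFL condition a (Σ_{i∈I} ℓᵢ) Δt / |T| ≤ 1 holds, then the updated cell-averaged water height h' := h − (Δt/|T|) Σ_{i∈I} ℓᵢ · (1/2)( q̌ᵢ⁻·nᵢ + q̌ᵢ⁺·nᵢ − a (η̌ᵢ⁺ − η̌ᵢ⁻) ) is nonnegative. -/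
noncomputable section

open scoped RealInnerProductSpace

lemma inner_smul_bound (a hv : ℝ) (ha : 0 ≤ a) (hh : 0 ≤ hv) (q nn : E2)
    (hq0 : hv = 0 → q = 0) (hbnd : 0 < hv → |⟪q, nn⟫| ≤ a * hv)
    (hc : ℝ) (hc0 : 0 ≤ hc) (hch : hc ≤ hv) :
    ⟪(hc / hv) • q, nn⟫ ≤ a * hc := by
  rcases eq_or_lt_of_le hh with h0 | hpos
  · have : q = 0 := hq0 h0.symm
    have hc' : hc = 0 := le_antisymm (hch.trans h0.symm.le) hc0
    simp [this, hc']
  · rw [real_inner_smul_left]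
    have h1 : ⟪q, nn⟫ ≤ a * hv := (le_abs_self _).trans (hbnd hpos)
    have h2 : 0 ≤ hc / hv := div_nonneg hc0 hpos.le
    calc hc / hv * ⟪q, nn⟫ ≤ hc / hv * (a * hv) := by nlinarith [mul_le_mul_of_nonneg_left h1 h2]
      _ = a * hc := by field_simp

/-- Positivity of the updated cell-averaged water height for the first
order Lax–Friedrichs scheme with hydrostatic reconstruction under the CFL condition
`a (Σᵢ ℓᵢ) Δt / |T| ≤ 1`. -/
theorem LF_scheme_positivity {ι : Type*} (s : Finset ι)
    (g Δt area : ℝ) (hg : 0 ≤ g) (hΔt : 0 < Δt) (harea : 0 < area)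
    (ℓ : ι → ℝ) (hℓ : ∀ i ∈ s, 0 < ℓ i)
    (n : ι → E2) (hn : ∀ i ∈ s, ‖n i‖ = 1)
    (hclosed : ∑ i ∈ s, ℓ i • n i = 0)
    (η b : ℝ) (q : E2)
    (hh : 0 ≤ η - b) (hq0 : η - b = 0 → q = 0)
    (ηe be : ι → ℝ) (qe : ι → E2)
    (hhe : ∀ i ∈ s, 0 ≤ ηe i - be i) (hqe0 : ∀ i ∈ s, ηe i - be i = 0 → qe i = 0)
    (a : ℝ) (ha : 0 ≤ a)
    (ha_int : ∀ i ∈ s, 0 < η - b → |⟪q, n i⟫| / (η - b) + Real.sqrt (g * (η - b)) ≤ a)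
    (ha_ext : ∀ i ∈ s, 0 < ηe i - be i →
      |⟪qe i, n i⟫| / (ηe i - be i) + Real.sqrt (g * (ηe i - be i)) ≤ a)
    (hCFL : a * (∑ i ∈ s, ℓ i) * Δt / area ≤ 1) :
    0 ≤ (η - b) - (Δt / area) * ∑ i ∈ s, ℓ i *
        ((1 / 2 : ℝ) * (⟪qcheckm η b (be i) q, n i⟫ + ⟪qcheckp η (ηe i) b (be i) (qe i), n i⟫
          - a * (etacheckp η (ηe i) b (be i) - etacheckm η b (be i)))) := by
  set h := η - b with hdef
  have key : ∀ i ∈ s, ℓ i *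
        ((1 / 2 : ℝ) * (⟪qcheckm η b (be i) q, n i⟫ + ⟪qcheckp η (ηe i) b (be i) (qe i), n i⟫
          - a * (etacheckp η (ηe i) b (be i) - etacheckm η b (be i)))) ≤ ℓ i * (a * h) := by
    intro i hi
    apply mul_le_mul_of_nonneg_left _ (hℓ i hi).le
    set hm := hcheckm η b (be i) with hmdef
    set hp := hcheckp η (ηe i) b (be i) with hpdef
    have heta : etacheckp η (ηe i) b (be i) - etacheckm η b (be i) = hp - hm := by
      unfold etacheckp etacheckm; ring
    have hm0 : 0 ≤ hm := le_max_left _ _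
    have hp0 : 0 ≤ hp := le_max_left _ _
    have hmle : hm ≤ h := by
      apply max_le hh
      have : b ≤ bstar b (be i) := le_max_left _ _
      simp only [hdef]; linarith
    have hple : hp ≤ ηe i - be i := by
      apply max_le (hhe i hi)
      have : be i ≤ bstar b (be i) := le_max_right _ _
      linarith
    have bm : ⟪qcheckm η b (be i) q, n i⟫ ≤ a * hm := by
      apply inner_smul_bound a h ha hh q (n i) hq0 _ hm hm0 hmle
      intro hpos
      have := ha_int i hi hpos
      have hs : 0 ≤ Real.sqrt (g * h) := Real.sqrt_nonneg _
      rw [div_add' _ _ _ (ne_of_gt hpos), div_le_iff₀ hpos] at this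
      nlinarith
    have bp : ⟪qcheckp η (ηe i) b (be i) (qe i), n i⟫ ≤ a * hp := by
      apply inner_smul_bound a (ηe i - be i) ha (hhe i hi) (qe i) (n i) (hqe0 i hi) _ hp hp0 hple
      intro hpos
      have := ha_ext i hi hpos
      have hs : 0 ≤ Real.sqrt (g * (ηe i - be i)) := Real.sqrt_nonneg _
      rw [div_add' _ _ _ (ne_of_gt hpos), div_le_iff₀ hpos] at this
      nlinarith
    have : a * hm ≤ a * h := mul_le_mul_of_nonneg_left hmle ha
    have hexp : a * (hp - hm) = a * hp - a * hm := by ring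
    rw [heta]; nlinarith [bm, bp, this, hexp]
  have hsum : ∑ i ∈ s, ℓ i *
        ((1 / 2 : ℝ) * (⟪qcheckm η b (be i) q, n i⟫ + ⟪qcheckp η (ηe i) b (be i) (qe i), n i⟫
          - a * (etacheckp η (ηe i) b (be i) - etacheckm η b (be i))))
      ≤ ∑ i ∈ s, ℓ i * (a * h) := Finset.sum_le_sum key
  have hL : ∑ i ∈ s, ℓ i * (a * h) = a * h * ∑ i ∈ s, ℓ i := by
    rw [Finset.mul_sum]; exact Finset.sum_congr rfl fun i _ => by ring
  have hcoef : 0 < Δt / area := div_pos hΔt harea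
  have h1 : (Δt / area) * ∑ i ∈ s, ℓ i *
        ((1 / 2 : ℝ) * (⟪qcheckm η b (be i) q, n i⟫ + ⟪qcheckp η (ηe i) b (be i) (qe i), n i⟫
          - a * (etacheckp η (ηe i) b (be i) - etacheckm η b (be i))))
      ≤ (Δt / area) * (a * h * ∑ i ∈ s, ℓ i) := by
    apply mul_le_mul_of_nonneg_left _ hcoef.le
    rw [← hL]; exact hsum
  have h2 : (Δt / area) * (a * h * ∑ i ∈ s, ℓ i) ≤ h := by
    have : (Δt / area) * (a * h * ∑ i ∈ s, ℓ i) = h * (a * (∑ i ∈ s, ℓ i) * Δt / area) := by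
      field_simp
    rw [this]
    calc h * (a * (∑ i ∈ s, ℓ i) * Δt / area) ≤ h * 1 := mul_le_mul_of_nonneg_left hCFL hh
      _ = h := mul_one h
  linarith
end
end

section
/- Let T ⊆ ℝ² be measurable with 0 < μ(T) < ∞ for the Lebesgue measure μ, let h : T → ℝ be integrable with cell average h̄ = μ(T)⁻¹ ∫_T h dμ ≥ 0, let S ⊆ T be a finite nonempty set and m = min_{x∈S} h(x). Define θ = min( h̄/(h̄ − m), 1 ) if m < h̄ and θ = 1 otherwise, and set ĥ(x) = θ (h(x) − h̄) + h̄. Then 0 ≤ θ ≤ 1, the limited function has the same cell average, μ(T)⁻¹ ∫_T ĥ dμ = h̄, and ĥ(x) ≥ 0 for every x ∈ S. -/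
noncomputable section

open MeasureTheory

/-- The conservative linear scaling limiter of Zhang and Shu:
`0 ≤ θ ≤ 1`, the limited function `hHat = θ(h − h̄) + h̄` has the same cell average on `T`,
and `hHat ≥ 0` at every point of the finite set `S`. -/
theorem zhang_shu_limiter (T : Set E2) (hT : MeasurableSet T)
    (hT0 : 0 < volume T) (hTfin : volume T < ⊤)
    (h : E2 → ℝ) (hInt : IntegrableOn h T volume)
    (hbar : ℝ) (hbar_def : hbar = (volume T).toReal⁻¹ * ∫ x in T, h x)
    (hbar_nonneg : 0 ≤ hbar)
    (S : Finset E2) (hS : S.Nonempty) (hST : ↑S ⊆ T)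
    (m : ℝ) (hm : m = S.inf' hS h)
    (θ : ℝ) (hθ : θ = if m < hbar then min (hbar / (hbar - m)) 1 else 1)
    (hHat : E2 → ℝ) (hhHat : hHat = fun x => θ * (h x - hbar) + hbar) :
    0 ≤ θ ∧ θ ≤ 1
      ∧ (volume T).toReal⁻¹ * ∫ x in T, hHat x = hbar
      ∧ ∀ x ∈ S, 0 ≤ hHat x := by
  have hμpos : 0 < (volume T).toReal := ENNReal.toReal_pos hT0.ne' hTfin.ne
  have hθ0 : 0 ≤ θ := by
    rw [hθ]
    split_ifs with hmb
    · exact le_min (div_nonneg hbar_nonneg (by linarith)) zero_le_one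
    · norm_num
  have hθ1 : θ ≤ 1 := by
    rw [hθ]; split_ifs with hmb
    · exact min_le_right _ _
    · exact le_refl 1
  refine ⟨hθ0, hθ1, ?_, ?_⟩
  · have hIntT : ∫ x in T, h x = hbar * (volume T).toReal := by
      rw [hbar_def]; field_simp
    have : ∫ x in T, hHat x = θ * ((∫ x in T, h x) - hbar * (volume T).toReal)
        + hbar * (volume T).toReal := by
      have hIntC : IntegrableOn (fun _ : E2 => hbar) T volume :=
        integrableOn_const hTfin.ne
      have hInt1 : IntegrableOn (fun x => θ * (h x - hbar)) T volume :=
        ((hInt.sub hIntC).const_mul θ)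
      rw [hhHat]
      simp only
      rw [integral_add hInt1 hIntC, MeasureTheory.integral_const_mul,
        integral_sub hInt hIntC, setIntegral_const]
      simp [smul_eq_mul, mul_comm, Measure.real]
    rw [this, hIntT]
    field_simp
    ring
  · intro x hx
    have hmx : m ≤ h x := hm ▸ Finset.inf'_le h hx
    rw [hhHat]
    simp only
    rw [hθ]
    split_ifs with hmb
    · rcases le_or_gt hbar (h x) with hc | hc
      · have : 0 ≤ min (hbar / (hbar - m)) 1 :=
          le_min (div_nonneg hbar_nonneg (by linarith)) zero_le_one
        nlinarith
      · have hden : 0 < hbar - m := by linarith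
        have h1 : min (hbar / (hbar - m)) 1 ≤ hbar / (hbar - m) := min_le_left _ _
        have h2 : min (hbar / (hbar - m)) 1 * (hbar - h x) ≤ (hbar / (hbar - m)) * (hbar - m) := by
          apply mul_le_mul h1 (by linarith) (by linarith)
          exact div_nonneg hbar_nonneg hden.le
        rw [div_mul_cancel₀ _ hden.ne'] at h2
        nlinarith [h2]
    · push_neg at hmb; nlinarith
end
end

section
/- Let g > 0, h₀ > 0 and ε > 0, and set c = √(g h₀ (1+ε)) and κ = √( 3ε / (4 h₀² (1+ε)) ). Define h(t,x) = h₀ + ε h₀ sech²(κ (x − c t)) and u(t,x) = c (1 − h₀ / h(t,x)) for (t,x) ∈ ℝ², and let M = ∂_t u + u ∂_x u denote the material derivative of u. Then the one-dimensional flat-bottom Green–Naghdi (Serre) momentum equation holds at every point of ℝ²: M − (1/(3h)) ∂_x( h³ ∂_x M ) + g ∂_x h + (2/(3h)) ∂_x( h³ (∂_x u)² ) = 0. -/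
noncomputable section

/-- The hyperbolic secant, `sech y = 1 / cosh y`. -/
def sech (y : ℝ) : ℝ := 1 / Real.cosh y

lemma sech_sq_eq (y : ℝ) : sech y ^ 2 = (Real.cosh y)⁻¹ ^ 2 := by
  simp [sech, one_div]

lemma tanh_sq_add_sech_sq (y : ℝ) : Real.tanh y ^ 2 = 1 - sech y ^ 2 := by
  have h := Real.cosh_sq_sub_sinh_sq y
  have hc : Real.cosh y ≠ 0 := (Real.cosh_pos y).ne'
  rw [Real.tanh_eq_sinh_div_cosh, sech]
  field_simp
  linarith

lemma sech_sq_nonneg (y : ℝ) : 0 ≤ sech y ^ 2 := sq_nonneg _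

lemma hasDerivAt_sech_sq (y : ℝ) :
    HasDerivAt (fun z => sech z ^ 2) (-2 * sech y ^ 2 * Real.tanh y) y := by
  have hc : Real.cosh y ≠ 0 := (Real.cosh_pos y).ne'
  have h1 : HasDerivAt (fun z => (Real.cosh z)⁻¹) (-(Real.sinh y) / Real.cosh y ^ 2) y :=
    (Real.hasDerivAt_cosh y).inv hc
  have h2 := h1.fun_pow 2
  have hfe : (fun z => ((Real.cosh z)⁻¹) ^ 2) = fun z => sech z ^ 2 := by
    funext z; simp [sech, one_div]
  rw [hfe] at h2
  refine h2.congr_deriv ?_; symm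
  have hp : (Real.cosh y)⁻¹ ^ (2 - 1) = (Real.cosh y)⁻¹ := pow_one _
  rw [hp, Real.tanh_eq_sinh_div_cosh, sech]
  push_cast
  field_simp

lemma hasDerivAt_tanh (y : ℝ) : HasDerivAt Real.tanh (sech y ^ 2) y := by
  have hc : Real.cosh y ≠ 0 := (Real.cosh_pos y).ne'
  have h1 : HasDerivAt (fun z => Real.sinh z / Real.cosh z)
      ((Real.cosh y * Real.cosh y - Real.sinh y * Real.sinh y) / Real.cosh y ^ 2) y :=
    (Real.hasDerivAt_sinh y).div (Real.hasDerivAt_cosh y) hc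
  have hfe : (fun z => Real.sinh z / Real.cosh z) = Real.tanh := by
    funext z; rw [Real.tanh_eq_sinh_div_cosh]
  rw [hfe] at h1
  convert h1 using 1
  have h := Real.cosh_sq_sub_sinh_sq y
  rw [sech]
  field_simp
  nlinarith [h]

section aux

variable (κ c : ℝ)

/-- `v = sech²(κ(x-ct))`. -/
def vv (t x : ℝ) : ℝ := sech (κ * (x - c * t)) ^ 2

/-- `T = tanh(κ(x-ct))`. -/
def tt (t x : ℝ) : ℝ := Real.tanh (κ * (x - c * t))

lemma tt_sq (t x : ℝ) : tt κ c t x ^ 2 = 1 - vv κ c t x :=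
  tanh_sq_add_sech_sq _

lemma vv_nonneg (t x : ℝ) : 0 ≤ vv κ c t x := sq_nonneg _

lemma hasDerivAt_theta_x (t x : ℝ) :
    HasDerivAt (fun z => κ * (z - c * t)) κ x := by
  simpa using ((hasDerivAt_id x).sub_const (c * t)).const_mul κ

lemma hasDerivAt_theta_t (t x : ℝ) :
    HasDerivAt (fun s => κ * (x - c * s)) (-(κ * c)) t := by
  have h1 : HasDerivAt (fun s : ℝ => x - c * s) (-c) t := by
    simpa using ((hasDerivAt_id t).const_mul c).const_sub x
  simpa [mul_comm, mul_neg] using h1.const_mul κ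

lemma hasDerivAt_vv_x (t x : ℝ) :
    HasDerivAt (fun z => vv κ c t z)
      (-2 * vv κ c t x * tt κ c t x * κ) x :=
  by have := (hasDerivAt_sech_sq (κ * (x - c * t))).comp x (hasDerivAt_theta_x κ c t x); exact this

lemma hasDerivAt_tt_x (t x : ℝ) :
    HasDerivAt (fun z => tt κ c t z) (vv κ c t x * κ) x :=
  (hasDerivAt_tanh (κ * (x - c * t))).comp x (hasDerivAt_theta_x κ c t x)

lemma hasDerivAt_vv_t (t x : ℝ) :
    HasDerivAt (fun s => vv κ c s x)
      (-2 * vv κ c t x * tt κ c t x * -(κ * c)) t :=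
  by have := (hasDerivAt_sech_sq (κ * (x - c * t))).comp t (hasDerivAt_theta_t κ c t x); exact this

end aux

set_option maxHeartbeats 3200000 in
/-- The solitary wave profile
`h(t,x) = h₀ + ε h₀ sech²(κ(x − ct))`, `u(t,x) = c(1 − h₀/h(t,x))` with
`c = √(g h₀ (1+ε))` and `κ = √(3ε/(4h₀²(1+ε)))` satisfies the one-dimensional
flat-bottom Green–Naghdi (Serre) momentum equation at every point of `ℝ²`:
`M − (1/(3h)) ∂ₓ(h³ ∂ₓ M) + g ∂ₓ h + (2/(3h)) ∂ₓ(h³ (∂ₓ u)²) = 0`, where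
`M = ∂ₜ u + u ∂ₓ u` is the material derivative of `u`. -/
theorem solitary_wave_GN_momentum (g h₀ ε : ℝ) (hg : 0 < g) (hh₀ : 0 < h₀)
    (hε : 0 < ε) (c κ : ℝ)
    (hc : c = Real.sqrt (g * h₀ * (1 + ε)))
    (hκ : κ = Real.sqrt (3 * ε / (4 * h₀ ^ 2 * (1 + ε))))
    (h u : ℝ → ℝ → ℝ)
    (hh : h = fun t x => h₀ + ε * h₀ * (sech (κ * (x - c * t))) ^ 2)
    (hu : u = fun t x => c * (1 - h₀ / h t x))
    (M : ℝ → ℝ → ℝ)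
    (hM : M = fun t x => deriv (fun s => u s x) t + u t x * deriv (fun y => u t y) x) :
    ∀ t x : ℝ,
      M t x
        - (1 / (3 * h t x)) * deriv (fun y => (h t y) ^ 3 * deriv (fun z => M t z) y) x
        + g * deriv (fun y => h t y) x
        + (2 / (3 * h t x)) * deriv (fun y => (h t y) ^ 3 * (deriv (fun z => u t z) y) ^ 2) x
      = 0 := by
  have h1ε : (0:ℝ) < 1 + ε := by linarith
  have hc2 : c ^ 2 = g * h₀ * (1 + ε) := by
    rw [hc]; exact Real.sq_sqrt (by positivity)
  have hκ2 : κ ^ 2 = 3 * ε / (4 * h₀ ^ 2 * (1 + ε)) := by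
    rw [hκ]; exact Real.sq_sqrt (by positivity)
  -- notation
  intro t x
  -- h as a function of vv
  have hhv : ∀ s y : ℝ, h s y = h₀ + ε * h₀ * vv κ c s y := by
    intro s y; rw [hh]; rfl
  have hden : ∀ s y : ℝ, (0:ℝ) < 1 + ε * vv κ c s y := by
    intro s y
    have h1 : 0 ≤ ε * vv κ c s y := mul_nonneg hε.le (vv_nonneg κ c s y)
    linarith
  have hhpos : ∀ s y : ℝ, 0 < h s y := by
    intro s y; rw [hhv]
    have h1 : 0 ≤ ε * h₀ * vv κ c s y :=
      mul_nonneg (mul_nonneg hε.le hh₀.le) (vv_nonneg κ c s y)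
    linarith
  -- derivative of h in x
  have Hh : ∀ y : ℝ, HasDerivAt (fun z => h t z)
      (ε * h₀ * (-2 * vv κ c t y * tt κ c t y * κ)) y := by
    intro y
    have h1 := ((hasDerivAt_vv_x κ c t y).const_mul (ε * h₀)).const_add h₀
    have hfe : (fun z => h₀ + ε * h₀ * vv κ c t z) = fun z => h t z := by
      funext z; rw [hhv]
    rw [hfe] at h1
    exact h1
  -- derivative of u in x
  have Hux : ∀ y : ℝ, HasDerivAt (fun z => u t z)
      (-2 * c * ε * κ * vv κ c t y * tt κ c t y / (1 + ε * vv κ c t y) ^ 2) y := by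
    intro y
    have hne : h t y ≠ 0 := (hhpos t y).ne'
    have h1 : HasDerivAt (fun z => h₀ / h t z)
        ((0 * h t y - h₀ * (ε * h₀ * (-2 * vv κ c t y * tt κ c t y * κ))) / (h t y) ^ 2) y :=
      (hasDerivAt_const y h₀).div (Hh y) hne
    have h2 := (h1.const_sub 1).const_mul c
    have hfe : (fun z => c * (1 - h₀ / h t z)) = fun z => u t z := by
      funext z; rw [hu]
    rw [hfe] at h2
    refine h2.congr_deriv ?_; symm
    rw [hhv]
    have hne2 : h₀ + ε * h₀ * vv κ c t y ≠ 0 := by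
      have h3 := hhpos t y; rw [hhv] at h3; exact h3.ne'
    have := (hden t y).ne'
    field_simp
    ring
  -- derivative of u in t
  have Hut : ∀ y : ℝ, HasDerivAt (fun s => u s y)
      (2 * c ^ 2 * ε * κ * vv κ c t y * tt κ c t y / (1 + ε * vv κ c t y) ^ 2) t := by
    intro y
    have hne : h t y ≠ 0 := (hhpos t y).ne'
    have Hht : HasDerivAt (fun s => h s y)
        (ε * h₀ * (-2 * vv κ c t y * tt κ c t y * -(κ * c))) t := by
      have h1 := ((hasDerivAt_vv_t κ c t y).const_mul (ε * h₀)).const_add h₀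
      have hfe : (fun s => h₀ + ε * h₀ * vv κ c s y) = fun s => h s y := by
        funext s; rw [hhv]
      rw [hfe] at h1
      exact h1
    have h1 : HasDerivAt (fun s => h₀ / h s y)
        ((0 * h t y - h₀ * (ε * h₀ * (-2 * vv κ c t y * tt κ c t y * -(κ * c)))) / (h t y) ^ 2) t :=
      (hasDerivAt_const t h₀).div Hht hne
    have h2 := (h1.const_sub 1).const_mul c
    have hfe : (fun s => c * (1 - h₀ / h s y)) = fun s => u s y := by
      funext s; rw [hu]
    rw [hfe] at h2
    refine h2.congr_deriv ?_; symm
    rw [hhv]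
    have hne2 : h₀ + ε * h₀ * vv κ c t y ≠ 0 := by
      have h3 := hhpos t y; rw [hhv] at h3; exact h3.ne'
    have := (hden t y).ne'
    field_simp
    ring
  -- the value of M
  have hMval : ∀ y : ℝ, M t y
      = 2 * c ^ 2 * ε * κ * vv κ c t y * tt κ c t y / (1 + ε * vv κ c t y) ^ 3 := by
    intro y
    simp only [hM]
    rw [(Hut y).deriv, (Hux y).deriv]
    simp only [hu]
    rw [hhv]
    have hne2 : h₀ + ε * h₀ * vv κ c t y ≠ 0 := by
      have h3 := hhpos t y; rw [hhv] at h3; exact h3.ne'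
    have := (hden t y).ne'
    field_simp
    ring
  -- derivative of M in x
  have HMx : ∀ y : ℝ, HasDerivAt (fun z => M t z)
      (2 * c ^ 2 * ε * κ ^ 2 * vv κ c t y *
        (-2 + 3 * vv κ c t y + 4 * ε * vv κ c t y - 3 * ε * vv κ c t y ^ 2)
        / (1 + ε * vv κ c t y) ^ 4) y := by
    intro y
    have hfe : (fun z => M t z)
        = fun z => 2 * c ^ 2 * ε * κ * vv κ c t z * tt κ c t z / (1 + ε * vv κ c t z) ^ 3 := by
      funext z; exact hMval z
    rw [hfe]
    have hnum : HasDerivAt (fun z => 2 * c ^ 2 * ε * κ * vv κ c t z * tt κ c t z)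
        (2 * c ^ 2 * ε * κ * (-2 * vv κ c t y * tt κ c t y * κ) * tt κ c t y
          + 2 * c ^ 2 * ε * κ * vv κ c t y * (vv κ c t y * κ)) y := by
      have h1 := ((hasDerivAt_vv_x κ c t y).const_mul (2 * c ^ 2 * ε * κ)).mul
        (hasDerivAt_tt_x κ c t y)
      exact h1
    have hdenD : HasDerivAt (fun z => (1 + ε * vv κ c t z) ^ 3)
        (3 * (1 + ε * vv κ c t y) ^ 2 * (ε * (-2 * vv κ c t y * tt κ c t y * κ))) y := by
      have h1 := (((hasDerivAt_vv_x κ c t y).const_mul ε).const_add 1).pow 3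
      exact h1
    have hne : ((1 + ε * vv κ c t y) ^ 3 : ℝ) ≠ 0 := pow_ne_zero 3 (hden t y).ne'
    have h2 := hnum.div hdenD hne
    refine h2.congr_deriv ?_; symm
    have hT2 := tt_sq κ c t y
    have := (hden t y).ne'
    field_simp
    ring_nf
    rw [hT2]
    ring
  -- derivative of h³ Mx
  have HGx : HasDerivAt
      (fun z => 2 * c ^ 2 * ε * κ ^ 2 * h₀ ^ 3 * (vv κ c t z *
        (-2 + 3 * vv κ c t z + 4 * ε * vv κ c t z - 3 * ε * vv κ c t z ^ 2))
        / (1 + ε * vv κ c t z))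
      (2 * c ^ 2 * ε * κ ^ 3 * h₀ ^ 3 * (-2 * vv κ c t x * tt κ c t x) *
        (-2 + 6 * vv κ c t x + 8 * ε * vv κ c t x - 6 * ε * vv κ c t x ^ 2
          + 4 * ε ^ 2 * vv κ c t x ^ 2 - 6 * ε ^ 2 * vv κ c t x ^ 3)
        / (1 + ε * vv κ c t x) ^ 2) x := by
    have hv := hasDerivAt_vv_x κ c t x
    have hnum : HasDerivAt (fun z => 2 * c ^ 2 * ε * κ ^ 2 * h₀ ^ 3 * (vv κ c t z *
        (-2 + 3 * vv κ c t z + 4 * ε * vv κ c t z - 3 * ε * vv κ c t z ^ 2)))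
        (2 * c ^ 2 * ε * κ ^ 2 * h₀ ^ 3 *
          ((-2 * vv κ c t x * tt κ c t x * κ) *
            (-2 + 3 * vv κ c t x + 4 * ε * vv κ c t x - 3 * ε * vv κ c t x ^ 2)
          + vv κ c t x * (3 * (-2 * vv κ c t x * tt κ c t x * κ)
            + 4 * ε * (-2 * vv κ c t x * tt κ c t x * κ)
            - 3 * ε * (2 * vv κ c t x * (-2 * vv κ c t x * tt κ c t x * κ))))) x := by
      have hsq : HasDerivAt (fun z => vv κ c t z ^ 2)
          (2 * vv κ c t x * (-2 * vv κ c t x * tt κ c t x * κ)) x := by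
        have := hv.fun_pow 2
        refine this.congr_deriv ?_; symm; ring
      have hin : HasDerivAt (fun z => -2 + 3 * vv κ c t z + 4 * ε * vv κ c t z
          - 3 * ε * vv κ c t z ^ 2)
          (3 * (-2 * vv κ c t x * tt κ c t x * κ)
            + 4 * ε * (-2 * vv κ c t x * tt κ c t x * κ)
            - 3 * ε * (2 * vv κ c t x * (-2 * vv κ c t x * tt κ c t x * κ))) x := by
        exact (((hv.const_mul 3).const_add (-2)).add (hv.const_mul (4 * ε))).sub
          (hsq.const_mul (3 * ε)) |>.congr_deriv (by ring) |>.congr_of_eventuallyEq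
          (by filter_upwards with z; simp only [Pi.add_apply, Pi.sub_apply])
      exact ((hv.mul hin).const_mul (2 * c ^ 2 * ε * κ ^ 2 * h₀ ^ 3)).congr_deriv (by ring)
    have hdenD : HasDerivAt (fun z => 1 + ε * vv κ c t z)
        (ε * (-2 * vv κ c t x * tt κ c t x * κ)) x :=
      (hv.const_mul ε).const_add 1
    have hne : (1 + ε * vv κ c t x : ℝ) ≠ 0 := (hden t x).ne'
    have h2 := hnum.div hdenD hne
    refine h2.congr_deriv ?_; symm
    field_simp
    ring
  -- derivative of h³ ux²
  have HPx : HasDerivAt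
      (fun z => 4 * c ^ 2 * ε ^ 2 * κ ^ 2 * h₀ ^ 3 *
        (vv κ c t z ^ 2 * (1 - vv κ c t z)) / (1 + ε * vv κ c t z))
      (4 * c ^ 2 * ε ^ 2 * κ ^ 3 * h₀ ^ 3 * (-2 * vv κ c t x * tt κ c t x) *
        (2 * vv κ c t x - 3 * vv κ c t x ^ 2 + ε * vv κ c t x ^ 2 - 2 * ε * vv κ c t x ^ 3)
        / (1 + ε * vv κ c t x) ^ 2) x := by
    have hv := hasDerivAt_vv_x κ c t x
    have hsq : HasDerivAt (fun z => vv κ c t z ^ 2)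
        (2 * vv κ c t x * (-2 * vv κ c t x * tt κ c t x * κ)) x := by
      have := hv.fun_pow 2
      refine this.congr_deriv ?_; symm; ring
    have hnum : HasDerivAt (fun z => 4 * c ^ 2 * ε ^ 2 * κ ^ 2 * h₀ ^ 3 *
        (vv κ c t z ^ 2 * (1 - vv κ c t z)))
        (4 * c ^ 2 * ε ^ 2 * κ ^ 2 * h₀ ^ 3 *
          (2 * vv κ c t x * (-2 * vv κ c t x * tt κ c t x * κ) * (1 - vv κ c t x)
            + vv κ c t x ^ 2 * -(-2 * vv κ c t x * tt κ c t x * κ))) x := by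
      exact ((hsq.mul (hv.const_sub 1)).const_mul
        (4 * c ^ 2 * ε ^ 2 * κ ^ 2 * h₀ ^ 3)).congr_deriv (by ring)
    have hdenD : HasDerivAt (fun z => 1 + ε * vv κ c t z)
        (ε * (-2 * vv κ c t x * tt κ c t x * κ)) x :=
      (hv.const_mul ε).const_add 1
    have hne : (1 + ε * vv κ c t x : ℝ) ≠ 0 := (hden t x).ne'
    have h2 := hnum.div hdenD hne
    refine h2.congr_deriv ?_; symm
    field_simp
    ring
  -- rewrite the inner deriv-functions in the goal
  have eqG : (fun y => (h t y) ^ 3 * deriv (fun z => M t z) y)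
      = fun z => 2 * c ^ 2 * ε * κ ^ 2 * h₀ ^ 3 * (vv κ c t z *
        (-2 + 3 * vv κ c t z + 4 * ε * vv κ c t z - 3 * ε * vv κ c t z ^ 2))
        / (1 + ε * vv κ c t z) := by
    funext z
    rw [(HMx z).deriv, hhv]
    have hne2 : h₀ + ε * h₀ * vv κ c t z ≠ 0 := by
      have h3 := hhpos t z; rw [hhv] at h3; exact h3.ne'
    have := (hden t z).ne'
    field_simp
  have eqP : (fun y => (h t y) ^ 3 * (deriv (fun z => u t z) y) ^ 2)
      = fun z => 4 * c ^ 2 * ε ^ 2 * κ ^ 2 * h₀ ^ 3 *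
        (vv κ c t z ^ 2 * (1 - vv κ c t z)) / (1 + ε * vv κ c t z) := by
    funext z
    rw [(Hux z).deriv, hhv]
    have hT2 := tt_sq κ c t z
    have hne2 : h₀ + ε * h₀ * vv κ c t z ≠ 0 := by
      have h3 := hhpos t z; rw [hhv] at h3; exact h3.ne'
    have := (hden t z).ne'
    field_simp
    ring_nf
    rw [hT2]
    ring
  rw [eqG, eqP, HGx.deriv, HPx.deriv, hMval x, (Hh x).deriv, hhv]
  -- final algebraic identity
  set v := vv κ c t x with hvdef
  set T := tt κ c t x with hTdef
  have hdne : (1 + ε * v : ℝ) ≠ 0 := (hden t x).ne'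
  have hκ3 : κ ^ 3 = κ * (3 * ε / (4 * h₀ ^ 2 * (1 + ε))) := by
    rw [pow_succ, mul_comm, hκ2]
  rw [hκ3, hc2]
  have h0ne : (h₀:ℝ) ≠ 0 := hh₀.ne'
  have he1 : (1 + ε : ℝ) ≠ 0 := h1ε.ne'
  have hhne : h₀ + ε * h₀ * v ≠ 0 := by
    have h3 := hhpos t x; rw [hhv] at h3; exact h3.ne'
  field_simp
  ring

end
end
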